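/- In an infinite-dimensional complete metric linear space, every proper closed linear subspace is shy. -/

import Mathlib

open MeasureTheory Set

variable {V : Type*} [AddCommGroup V] [Module ℝ V] [MetricSpace V] [CompleteSpace V]
  [IsTopologicalAddGroup V] [ContinuousSMul ℝ V] [MeasurableSpace V] [BorelSpace V]

/-- A set `S` is shy if it is contained in a Borel set admitting a transverse measure. -/
def Shy (S : Set V) : Prop :=
  ∃ T : Set V, S ⊆ T ∧ MeasurableSet T ∧
    ∃ μ : Measure V, (∃ U : Set V, IsCompact U ∧ 0 < μ U ∧ μ U < ⊤) ∧
      ∀ v : V, μ ((fun x => x + v) '' T) = 0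

/-- In an infinite-dimensional complete metric linear space, every proper closed
linear subspace is shy. -/
theorem stmt_9 (hdim : ¬ FiniteDimensional ℝ V) (W : Submodule ℝ V)
    (hclosed : IsClosed (W : Set V)) (hproper : W ≠ ⊤) :
    Shy (W : Set V) := by
  obtain ⟨w, hw⟩ : ∃ w : V, w ∉ W := by
    by_contra h
    push_neg at h
    exact hproper (Submodule.eq_top_iff'.2 h)
  have hcont : Continuous fun t : ℝ => t • w := continuous_id.smul continuous_const
  set f : ℝ → V := fun t => t • w with hf
  set ν : Measure ℝ := volume.restrict (Icc 0 1) with hν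
  refine ⟨W, subset_rfl, hclosed.measurableSet, Measure.map f ν,
    ⟨f '' Icc 0 1, isCompact_Icc.image hcont, ?_, ?_⟩, ?_⟩
  · rw [Measure.map_apply hcont.measurable
      (isCompact_Icc.image hcont).isClosed.measurableSet]
    have h1 : ν (f ⁻¹' (f '' Icc 0 1)) ≥ ν (Icc 0 1) :=
      measure_mono (subset_preimage_image f _)
    have h2 : ν (Icc 0 1) = 1 := by
      rw [hν, Measure.restrict_apply_self]
      simp
    rw [h2] at h1
    exact lt_of_lt_of_le one_pos h1
  · calc Measure.map f ν (f '' Icc 0 1) ≤ Measure.map f ν univ := measure_mono (subset_univ _)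
      _ = ν univ := by rw [Measure.map_apply hcont.measurable MeasurableSet.univ]; simp
      _ ≤ 1 := by rw [hν, Measure.restrict_apply MeasurableSet.univ]; simp
      _ < ⊤ := by simp
  · intro v
    have hmeas : MeasurableSet ((fun x => x + v) '' (W : Set V)) := by
      have : IsClosed ((fun x => x + v) '' (W : Set V)) :=
        (Homeomorph.addRight v).isClosedMap _ hclosed
      exact this.measurableSet
    rw [Measure.map_apply hcont.measurable hmeas]
    have hsub : (f ⁻¹' ((fun x => x + v) '' (W : Set V))).Subsingleton := by
      intro t₁ h₁ t₂ h₂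
      obtain ⟨u₁, hu₁, he₁⟩ := h₁
      obtain ⟨u₂, hu₂, he₂⟩ := h₂
      by_contra hne
      apply hw
      have : (t₁ - t₂) • w = u₁ - u₂ := by
        simp only [hf] at he₁ he₂
        rw [sub_smul, ← he₁, ← he₂]
        abel
      have hmem : (t₁ - t₂) • w ∈ W := this ▸ W.sub_mem hu₁ hu₂
      have := W.smul_mem (t₁ - t₂)⁻¹ hmem
      rwa [inv_smul_smul₀ (sub_ne_zero.2 hne)] at this
    have : ν (f ⁻¹' ((fun x => x + v) '' (W : Set V))) ≤
        volume (f ⁻¹' ((fun x => x + v) '' (W : Set V))) :=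
      Measure.restrict_le_self _
    rw [hsub.measure_zero volume] at this
    exact le_antisymm this (zero_le (a := _))
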